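/- Decomposition of the expected value of max with noise: for real numbers Z, C and a random variable ξ with finite mean, letting d = Z − C, E[max(Z, C + ξ)] − max(Z, C) = Cov(1[ξ ≥ d], ξ) + (Z − d·P[ξ ≥ d] − max(Z, C)) + E[ξ]·P[ξ ≥ d]. In particular, when E[ξ] = 0 the first term equals E[1[ξ ≥ d]ξ] and is nonnegative. -/

import Mathlib

open MeasureTheory

/-- Decomposition of the expected value of max with noise. For
reals Z, C, an integrable random variable ξ, and `d = Z − C`,
`E[max(Z, C + ξ)] − max(Z, C)
  = Cov(1[ξ ≥ d], ξ) + (Z − d·P[ξ ≥ d] − max(Z, C)) + E[ξ]·P[ξ ≥ d]`,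
and when `E[ξ] = 0` the covariance term equals `E[1[ξ ≥ d]ξ]` and is
nonnegative. -/
theorem max_noise_decomposition {Ω : Type*} [MeasurableSpace Ω]
    (μ : Measure Ω) [IsProbabilityMeasure μ]
    (ξ : Ω → ℝ) (hmeas : Measurable ξ) (hint : Integrable ξ μ)
    (Z C d : ℝ) (hd : d = Z - C) :
    (∫ ω, max Z (C + ξ ω) ∂μ) - max Z C
      = ((∫ ω, (if d ≤ ξ ω then (1 : ℝ) else 0) * ξ ω ∂μ)
          - (∫ ω, (if d ≤ ξ ω then (1 : ℝ) else 0) ∂μ) * (∫ ω, ξ ω ∂μ))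
        + (Z - d * (μ {ω | d ≤ ξ ω}).toReal - max Z C)
        + (∫ ω, ξ ω ∂μ) * (μ {ω | d ≤ ξ ω}).toReal ∧
    ((∫ ω, ξ ω ∂μ) = 0 →
      ((∫ ω, (if d ≤ ξ ω then (1 : ℝ) else 0) * ξ ω ∂μ)
          - (∫ ω, (if d ≤ ξ ω then (1 : ℝ) else 0) ∂μ) * (∫ ω, ξ ω ∂μ))
        = ∫ ω, (if d ≤ ξ ω then (1 : ℝ) else 0) * ξ ω ∂μ ∧
      0 ≤ ∫ ω, (if d ≤ ξ ω then (1 : ℝ) else 0) * ξ ω ∂μ) := by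
  set s : Set Ω := {ω | d ≤ ξ ω} with hsdef
  have hs : MeasurableSet s := measurableSet_le measurable_const hmeas
  -- indicator * ξ equals set indicator
  have hiξ : (fun ω => (if d ≤ ξ ω then (1 : ℝ) else 0) * ξ ω)
      = s.indicator ξ := by
    funext ω
    by_cases h : d ≤ ξ ω <;> simp [Set.indicator, hsdef, h]
  have hi1 : (fun ω => (if d ≤ ξ ω then (1 : ℝ) else 0))
      = s.indicator (fun _ => (1 : ℝ)) := by
    funext ω
    by_cases h : d ≤ ξ ω <;> simp [Set.indicator, hsdef, h]
  have hint_iξ : Integrable (s.indicator ξ) μ := hint.indicator hs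
  have hint_i1 : Integrable (s.indicator (fun _ => (1 : ℝ))) μ :=
    (integrable_const 1).indicator hs
  have hint_id : Integrable (s.indicator (fun _ => d)) μ :=
    (integrable_const d).indicator hs
  have h1int : (∫ ω, s.indicator (fun _ => (1 : ℝ)) ω ∂μ) = (μ s).toReal := by
    rw [integral_indicator_const _ hs]; simp [Measure.real]
  have hdint : (∫ ω, s.indicator (fun _ => d) ω ∂μ) = (μ s).toReal * d := by
    rw [integral_indicator_const _ hs]; simp [smul_eq_mul, Measure.real]
  -- pointwise identity
  have hmax : ∀ ω, max Z (C + ξ ω) = Z + s.indicator (fun ω => ξ ω - d) ω := by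
    intro ω
    by_cases h : d ≤ ξ ω
    · have h' : ω ∈ s := h
      have hz : Z ≤ C + ξ ω := by rw [hd] at h; linarith
      rw [Set.indicator_of_mem h', max_eq_right hz, hd]; ring
    · have h' : ω ∉ s := h
      push_neg at h
      have hz : C + ξ ω ≤ Z := by rw [hd] at h; linarith
      rw [Set.indicator_of_notMem h', max_eq_left hz, add_zero]
  have hsub : s.indicator (fun ω => ξ ω - d)
      = fun ω => s.indicator ξ ω - s.indicator (fun _ => d) ω := by
    funext ω
    by_cases h : ω ∈ s <;> simp [Set.indicator, h]
  have hintsub : Integrable (s.indicator (fun ω => ξ ω - d)) μ := by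
    rw [hsub]; exact hint_iξ.sub hint_id
  have hmaxint : (∫ ω, max Z (C + ξ ω) ∂μ)
      = Z + ((∫ ω, s.indicator ξ ω ∂μ) - (μ s).toReal * d) := by
    calc (∫ ω, max Z (C + ξ ω) ∂μ)
        = ∫ ω, (Z + s.indicator (fun ω => ξ ω - d) ω) ∂μ := by
          exact integral_congr_ae (Filter.Eventually.of_forall hmax)
      _ = Z + ∫ ω, s.indicator (fun ω => ξ ω - d) ω ∂μ := by
          rw [integral_add (integrable_const Z) hintsub, integral_const]
          simp
      _ = Z + ((∫ ω, s.indicator ξ ω ∂μ) - (μ s).toReal * d) := by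
          rw [hsub, integral_sub hint_iξ hint_id, hdint]
  constructor
  · rw [hiξ, hi1, h1int, hmaxint]
    ring
  · intro hEξ
    refine ⟨by rw [hEξ]; ring, ?_⟩
    rw [hiξ]
    by_cases hdpos : 0 ≤ d
    · apply integral_nonneg
      intro ω
      simp only [Pi.zero_apply]
      by_cases h : ω ∈ s
      · rw [Set.indicator_of_mem h]
        exact le_trans hdpos h
      · rw [Set.indicator_of_notMem h]
    · push_neg at hdpos
      have hsc : MeasurableSet sᶜ := hs.compl
      have hsplit : (fun ω => s.indicator ξ ω + sᶜ.indicator ξ ω) = ξ := by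
        funext ω; by_cases h : ω ∈ s <;> simp [Set.indicator, h]
      have hint_c : Integrable (sᶜ.indicator ξ) μ := hint.indicator hsc
      have hsum : (∫ ω, s.indicator ξ ω ∂μ) + (∫ ω, sᶜ.indicator ξ ω ∂μ) = 0 := by
        rw [← integral_add hint_iξ hint_c]
        simp only [hsplit]
        exact hEξ
      have hcneg : (∫ ω, sᶜ.indicator ξ ω ∂μ) ≤ 0 := by
        apply integral_nonpos
        intro ω
        simp only [Pi.zero_apply]
        by_cases h : ω ∈ sᶜ
        · rw [Set.indicator_of_mem h]
          have : ¬ d ≤ ξ ω := h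
          push_neg at this; linarith
        · rw [Set.indicator_of_notMem h]
      linarith
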